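/- Let α ∈ (1,2), δ > 0, ε < 0 and β > εαδ^{α−1} + √(−εα(α−1)δ^{α−2}), and define b:[0,1]→ℝ by b(z) = ε(z+δ)^α − βz. Then b is twice continuously differentiable with b(0) ≠ b(1), b'(z) = αε(z+δ)^{α−1} − β < 0 for all z ∈ [0,1], and b''(z) + b'(z)² = α(α−1)ε(z+δ)^{α−2} + (αε(z+δ)^{α−1} − β)² > 0 for all z ∈ [0,1]; in particular the power exponentially linked exposure example defines a well-defined distribution. -/

import Mathlib

/-- An exposure curve: a function `G : [0,1] → ℝ` that is twice continuously
differentiable (with continuous second derivative on `[0,1]`), non-decreasing,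
concave, with `G 0 = 0`, `G 1 = 1` and `G' 0 > 0`. -/
def IsExposureCurve (G : ℝ → ℝ) : Prop :=
  MonotoneOn G (Set.Icc 0 1) ∧ ConcaveOn ℝ (Set.Icc 0 1) G ∧
  G 0 = 0 ∧ G 1 = 1 ∧
  ∃ G' G'' : ℝ → ℝ,
    (∀ z ∈ Set.Icc (0:ℝ) 1, HasDerivWithinAt G (G' z) (Set.Icc 0 1) z) ∧
    (∀ z ∈ Set.Icc (0:ℝ) 1, HasDerivWithinAt G' (G'' z) (Set.Icc 0 1) z) ∧
    ContinuousOn G'' (Set.Icc 0 1) ∧ 0 < G' 0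

/-- For `α ∈ (1,2)`, `δ > 0`, `ε < 0` and
`β > εαδ^(α-1) + √(-εα(α-1)δ^(α-2))`, the inner function `b z = ε(z+δ)^α - βz` is
twice continuously differentiable on `[0,1]` with `b 0 ≠ b 1`,
`b' z = αε(z+δ)^(α-1) - β < 0` and `b'' z + (b' z)² > 0` on `[0,1]`; in particular the
power exponentially linked exposure example defines a well-defined distribution (the
exponentially linked curve is an exposure curve). -/
theorem statement18 (α δ ε β : ℝ)
    (hα : α ∈ Set.Ioo (1:ℝ) 2) (hδ : 0 < δ) (hε : ε < 0)
    (hβ : ε * α * δ ^ (α - 1) + Real.sqrt (-ε * α * (α - 1) * δ ^ (α - 2)) < β) :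
    let b : ℝ → ℝ := fun z => ε * (z + δ) ^ α - β * z
    let b' : ℝ → ℝ := fun z => α * ε * (z + δ) ^ (α - 1) - β
    let b'' : ℝ → ℝ := fun z => α * (α - 1) * ε * (z + δ) ^ (α - 2)
    b 0 ≠ b 1 ∧
    (∀ z ∈ Set.Icc (0:ℝ) 1, HasDerivWithinAt b (b' z) (Set.Icc 0 1) z) ∧
    (∀ z ∈ Set.Icc (0:ℝ) 1, HasDerivWithinAt b' (b'' z) (Set.Icc 0 1) z) ∧
    ContinuousOn b'' (Set.Icc 0 1) ∧
    (∀ z ∈ Set.Icc (0:ℝ) 1, b' z < 0) ∧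
    (∀ z ∈ Set.Icc (0:ℝ) 1, 0 < b'' z + (b' z) ^ 2) ∧
    IsExposureCurve
      (fun z => (Real.exp (b z) - Real.exp (b 0)) / (Real.exp (b 1) - Real.exp (b 0))) := by
  obtain ⟨hα1, hα2⟩ := hα
  intro b b' b''
  have hα0 : (0:ℝ) < α := by linarith
  -- basic positivity on Icc
  have hpos : ∀ z ∈ Set.Icc (0:ℝ) 1, 0 < z + δ := fun z hz => by
    have := hz.1; linarith
  -- derivative of b
  have hbAt : ∀ z : ℝ, 0 < z + δ → HasDerivAt b (b' z) z := by
    intro z hz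
    have h1 : HasDerivAt (fun x : ℝ => x + δ) 1 z := (hasDerivAt_id z).add_const δ
    have h2 : HasDerivAt (fun x : ℝ => (x + δ) ^ α) (α * (z + δ) ^ (α - 1) * 1) z :=
      by have := (Real.hasDerivAt_rpow_const (p := α) (Or.inl hz.ne')).comp z h1; exact this
    have h3 := (h2.const_mul ε).sub ((hasDerivAt_id z).const_mul β)
    refine h3.congr_deriv ?_
    simp [b']; ring
  -- derivative of b'
  have hb'At : ∀ z : ℝ, 0 < z + δ → HasDerivAt b' (b'' z) z := by
    intro z hz
    have h1 : HasDerivAt (fun x : ℝ => x + δ) 1 z := (hasDerivAt_id z).add_const δ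
    have h2 : HasDerivAt (fun x : ℝ => (x + δ) ^ (α - 1))
        ((α - 1) * (z + δ) ^ (α - 1 - 1) * 1) z :=
      by have := (Real.hasDerivAt_rpow_const (p := α - 1) (Or.inl hz.ne')).comp z h1; exact this
    have h3 := (h2.const_mul (α * ε)).sub_const β
    refine h3.congr_deriv ?_
    have : α - 1 - 1 = α - 2 := by ring
    simp [b'', this]; ring
  -- continuity of b, b', b''
  have hbc : ContinuousOn b (Set.Icc 0 1) := fun z hz =>
    ((hbAt z (hpos z hz)).continuousAt).continuousWithinAt
  have hb'c : ContinuousOn b' (Set.Icc 0 1) := fun z hz =>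
    ((hb'At z (hpos z hz)).continuousAt).continuousWithinAt
  have hb''c : ContinuousOn b'' (Set.Icc 0 1) := by
    apply ContinuousOn.mul continuousOn_const
    exact ContinuousOn.rpow_const ((continuous_id.add continuous_const).continuousOn)
      (fun z hz => Or.inl (hpos z hz).ne')
  -- b' is negative
  have hS0 : 0 ≤ -ε * α * (α - 1) * δ ^ (α - 2) := by
    have h1 : (0:ℝ) < δ ^ (α - 2) := Real.rpow_pos_of_pos hδ _
    have h2 : (0:ℝ) < -ε * α * (α - 1) :=
      mul_pos (mul_pos (neg_pos.mpr hε) hα0) (by linarith)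
    positivity
  set S := Real.sqrt (-ε * α * (α - 1) * δ ^ (α - 2)) with hSdef
  have hSnn : 0 ≤ S := Real.sqrt_nonneg _
  have hS2 : S ^ 2 = -ε * α * (α - 1) * δ ^ (α - 2) := Real.sq_sqrt hS0
  have hb'le : ∀ z ∈ Set.Icc (0:ℝ) 1, b' z ≤ α * ε * δ ^ (α - 1) - β := by
    intro z hz
    have h1 : δ ^ (α - 1) ≤ (z + δ) ^ (α - 1) :=
      Real.rpow_le_rpow hδ.le (by linarith [hz.1]) (by linarith)
    have h2 : α * ε < 0 := by nlinarith
    have := mul_le_mul_of_nonpos_left h1 h2.le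
    simp only [b']; linarith
  have hb'ltS : ∀ z ∈ Set.Icc (0:ℝ) 1, b' z < -S := by
    intro z hz
    have := hb'le z hz
    have : α * ε * δ ^ (α - 1) - β < -S := by nlinarith
    linarith [hb'le z hz]
  have hb'neg : ∀ z ∈ Set.Icc (0:ℝ) 1, b' z < 0 := by
    intro z hz
    have := hb'ltS z hz; linarith
  -- b'' + b'^2 > 0
  have hkey : ∀ z ∈ Set.Icc (0:ℝ) 1, 0 < b'' z + (b' z) ^ 2 := by
    intro z hz
    have h1 : (z + δ) ^ (α - 2) ≤ δ ^ (α - 2) :=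
      Real.rpow_le_rpow_of_nonpos hδ (by linarith [hz.1]) (by linarith)
    have h2 : α * (α - 1) * ε < 0 := by
      have := mul_pos (mul_pos hα0 (by linarith : (0:ℝ) < α - 1)) (neg_pos.mpr hε)
      linarith
    have h3 : α * (α - 1) * ε * δ ^ (α - 2) ≤ b'' z :=
      mul_le_mul_of_nonpos_left h1 h2.le
    have h4 : b' z < -S := hb'ltS z hz
    have h5 : S ^ 2 < (b' z) ^ 2 := by nlinarith
    have h6 : α * (α - 1) * ε * δ ^ (α - 2) = -S ^ 2 := by rw [hS2]; ring
    nlinarith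
  -- b is strictly decreasing
  have hanti : StrictAntiOn b (Set.Icc 0 1) := by
    apply strictAntiOn_of_deriv_neg (convex_Icc 0 1) hbc
    intro x hx
    rw [interior_Icc] at hx
    have hxp : 0 < x + δ := by linarith [hx.1]
    rw [(hbAt x hxp).deriv]
    exact hb'neg x (Set.mem_Icc.mpr ⟨hx.1.le, hx.2.le⟩)
  have hb10 : b 1 < b 0 :=
    hanti (Set.mem_Icc.mpr ⟨le_refl 0, zero_le_one⟩)
      (Set.mem_Icc.mpr ⟨zero_le_one, le_refl 1⟩) zero_lt_one
  have hbne : b 0 ≠ b 1 := (ne_of_lt hb10).symm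
  -- the exposure curve
  set C := Real.exp (b 1) - Real.exp (b 0) with hCdef
  have hC : C < 0 := by
    have := Real.exp_lt_exp.mpr hb10; simp only [hCdef]; linarith
  set G : ℝ → ℝ := fun z => (Real.exp (b z) - Real.exp (b 0)) / C with hGdef
  set G' : ℝ → ℝ := fun z => b' z * Real.exp (b z) / C with hG'def
  set G'' : ℝ → ℝ := fun z => (b'' z + (b' z) ^ 2) * Real.exp (b z) / C with hG''def
  have hGAt : ∀ z : ℝ, 0 < z + δ → HasDerivAt G (G' z) z := by
    intro z hz
    have h1 := (((hbAt z hz).exp).sub_const (Real.exp (b 0))).div_const C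
    refine h1.congr_deriv ?_
    simp only [hG'def]; ring
  have hG'At : ∀ z : ℝ, 0 < z + δ → HasDerivAt G' (G'' z) z := by
    intro z hz
    have h1 := (((hb'At z hz).mul ((hbAt z hz).exp))).div_const C
    refine h1.congr_deriv ?_
    simp only [hG''def]; ring
  have hG'pos : ∀ z ∈ Set.Icc (0:ℝ) 1, 0 < G' z := by
    intro z hz
    have h1 : b' z * Real.exp (b z) < 0 :=
      mul_neg_of_neg_of_pos (hb'neg z hz) (Real.exp_pos _)
    exact div_pos_of_neg_of_neg h1 hC
  have hG''neg : ∀ z ∈ Set.Icc (0:ℝ) 1, G'' z < 0 := by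
    intro z hz
    have h1 : 0 < (b'' z + (b' z) ^ 2) * Real.exp (b z) :=
      mul_pos (hkey z hz) (Real.exp_pos _)
    exact div_neg_of_pos_of_neg h1 hC
  have hGc : ContinuousOn G (Set.Icc 0 1) := fun z hz =>
    ((hGAt z (hpos z hz)).continuousAt).continuousWithinAt
  refine ⟨hbne, fun z hz => (hbAt z (hpos z hz)).hasDerivWithinAt,
    fun z hz => (hb'At z (hpos z hz)).hasDerivWithinAt, hb''c, hb'neg, hkey, ?_, ?_, ?_, ?_, ?_⟩
  · -- MonotoneOn
    apply (strictMonoOn_of_deriv_pos (convex_Icc 0 1) hGc ?_).monotoneOn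
    intro x hx
    rw [interior_Icc] at hx
    have hxp : 0 < x + δ := by linarith [hx.1]
    rw [(hGAt x hxp).deriv]
    exact hG'pos x (Set.mem_Icc.mpr ⟨hx.1.le, hx.2.le⟩)
  · -- ConcaveOn
    refine concaveOn_of_hasDerivWithinAt2_nonpos (convex_Icc 0 1) hGc
      (f' := G') (f'' := G'') ?_ ?_ ?_
    · intro x hx
      rw [interior_Icc] at hx
      exact (hGAt x (by linarith [hx.1])).hasDerivWithinAt
    · intro x hx
      rw [interior_Icc] at hx
      exact (hG'At x (by linarith [hx.1])).hasDerivWithinAt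
    · intro x hx
      rw [interior_Icc] at hx
      exact (hG''neg x (Set.mem_Icc.mpr ⟨hx.1.le, hx.2.le⟩)).le
  · simp [hGdef]
  · simp only [hGdef]
    exact div_self (ne_of_lt hC)
  · refine ⟨G', G'', fun z hz => (hGAt z (hpos z hz)).hasDerivWithinAt,
      fun z hz => (hG'At z (hpos z hz)).hasDerivWithinAt, ?_, ?_⟩
    · apply ContinuousOn.div_const
      exact ((hb''c.add (hb'c.pow 2)).mul (Real.continuous_exp.comp_continuousOn hbc))
    · exact hG'pos 0 (Set.mem_Icc.mpr ⟨le_refl 0, zero_le_one⟩)
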